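/- Let p, q, r be pairwise distinct nonlogical atoms. Then CL1 proves ((p→q)⊓(p→r)) → (p→(q⊓r)), but CL1 does not prove ((p→q)⊓(p→r)) → (p→(q∧r)). -/

import Mathlib

namespace CoL

/-- CL1-formulas: built from the logical atoms ⊤, ⊥ and nonlogical atoms by
¬, ∧, ∨, ⊓ (`cand`), ⊔ (`cor`).  `F → G` abbreviates `(¬F) ∨ G`. -/
inductive PF : Type
  | top : PF
  | bot : PF
  | atom (n : ℕ) : PF
  | neg (f : PF) : PF
  | and (f g : PF) : PF
  | or (f g : PF) : PF
  | cand (f g : PF) : PF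
  | cor (f g : PF) : PF
deriving DecidableEq

/-- `F → G` abbreviates `(¬F) ∨ G`. -/
def PF.imp (f g : PF) : PF := .or (.neg f) g

/-- Classical evaluation of a formula under an assignment of truth values to the
nonlogical atoms (the clauses for ⊓, ⊔ are irrelevant junk: they are only ever
used on elementary formulas). -/
def PF.eval (v : ℕ → Bool) : PF → Bool
  | .top => true
  | .bot => false
  | .atom n => v n
  | .neg f => !f.eval v
  | .and f g => f.eval v && g.eval v
  | .or f g => f.eval v || g.eval v
  | .cand _ _ => false
  | .cor _ _ => false

/-- Classical tautology: true under every assignment. -/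
def PF.Taut (f : PF) : Prop := ∀ v : ℕ → Bool, f.eval v = true

/-- The elementarization of a CL1-formula: every surface occurrence of `G⊓H` is
replaced by ⊤ and every surface occurrence of `G⊔H` by ⊥. -/
def PF.elem : PF → PF
  | .top => .top
  | .bot => .bot
  | .atom n => .atom n
  | .neg f => .neg f.elem
  | .and f g => .and f.elem g.elem
  | .or f g => .or f.elem g.elem
  | .cand _ _ => .top
  | .cor _ _ => .bot

/-- A CL1-formula is stable iff its elementarization is a classical tautology. -/
def PF.Stable (f : PF) : Prop := f.elem.Taut

/-- `RuleAPrem pol F H`: `H` is the result of replacing in `F` one surface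
occurrence of a subformula `G₁⊓G₂` occurring positively (resp. of `G₁⊔G₂`
occurring negatively) by `G_i`; `pol` is the polarity of the context (`true` =
positive). -/
inductive RuleAPrem : Bool → PF → PF → Prop
  | cand1 (g₁ g₂) : RuleAPrem true (.cand g₁ g₂) g₁
  | cand2 (g₁ g₂) : RuleAPrem true (.cand g₁ g₂) g₂
  | cor1 (g₁ g₂) : RuleAPrem false (.cor g₁ g₂) g₁
  | cor2 (g₁ g₂) : RuleAPrem false (.cor g₁ g₂) g₂
  | negc {pol f h} : RuleAPrem (!pol) f h → RuleAPrem pol (.neg f) (.neg h)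
  | andl {pol f h} (g) : RuleAPrem pol f h → RuleAPrem pol (.and f g) (.and h g)
  | andr {pol f h} (g) : RuleAPrem pol f h → RuleAPrem pol (.and g f) (.and g h)
  | orl {pol f h} (g) : RuleAPrem pol f h → RuleAPrem pol (.or f g) (.or h g)
  | orr {pol f h} (g) : RuleAPrem pol f h → RuleAPrem pol (.or g f) (.or g h)

/-- `RuleBPrem pol F H`: `H` is the result of replacing in `F` one surface
occurrence of a subformula `G₁⊓G₂` occurring negatively (resp. of `G₁⊔G₂`
occurring positively) by `G_i`. -/
inductive RuleBPrem : Bool → PF → PF → Prop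
  | cand1 (g₁ g₂) : RuleBPrem false (.cand g₁ g₂) g₁
  | cand2 (g₁ g₂) : RuleBPrem false (.cand g₁ g₂) g₂
  | cor1 (g₁ g₂) : RuleBPrem true (.cor g₁ g₂) g₁
  | cor2 (g₁ g₂) : RuleBPrem true (.cor g₁ g₂) g₂
  | negc {pol f h} : RuleBPrem (!pol) f h → RuleBPrem pol (.neg f) (.neg h)
  | andl {pol f h} (g) : RuleBPrem pol f h → RuleBPrem pol (.and f g) (.and h g)
  | andr {pol f h} (g) : RuleBPrem pol f h → RuleBPrem pol (.and g f) (.and g h)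
  | orl {pol f h} (g) : RuleBPrem pol f h → RuleBPrem pol (.or f g) (.or h g)
  | orr {pol f h} (g) : RuleBPrem pol f h → RuleBPrem pol (.or g f) (.or g h)

/-- Provability in CL1: Rule (a) derives a stable `F` from the set of all results
of replacing a positive surface `G₁⊓G₂` (negative surface `G₁⊔G₂`) by `G_i`;
Rule (b) derives `F` from the result of replacing one negative surface `G₁⊓G₂`
(positive surface `G₁⊔G₂`) by `G_i`. -/
inductive CL1Prov : PF → Prop
  | ruleA {f} : f.Stable → (∀ h, RuleAPrem true f h → CL1Prov h) → CL1Prov f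
  | ruleB {f h} : RuleBPrem true f h → CL1Prov h → CL1Prov f


/-- A formula has a surface occurrence of ⊓ or ⊔. -/
def PF.surf : PF → Bool
  | .top => false
  | .bot => false
  | .atom _ => false
  | .neg f => f.surf
  | .and f g => f.surf || g.surf
  | .or f g => f.surf || g.surf
  | .cand _ _ => true
  | .cor _ _ => true

lemma ruleA_surf {pol f h} (H : RuleAPrem pol f h) : f.surf = true := by
  induction H <;> simp [PF.surf, *]

lemma ruleB_surf {pol f h} (H : RuleBPrem pol f h) : f.surf = true := by
  induction H <;> simp [PF.surf, *]

lemma prov_of_elem {f : PF} (h0 : f.surf = false) (h1 : f.Stable) : CL1Prov f :=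
  .ruleA h1 (fun h hh => absurd (ruleA_surf hh) (by simp [h0]))

/-- For pairwise distinct nonlogical atoms `p,q,r`: CL1 proves
`((p→q)⊓(p→r)) → (p→(q⊓r))` but does not prove `((p→q)⊓(p→r)) → (p→(q∧r))`. -/
theorem cl1_example (p q r : ℕ) (hpq : p ≠ q) (hpr : p ≠ r) (hqr : q ≠ r) :
    CL1Prov (PF.imp
      (PF.cand (PF.imp (.atom p) (.atom q)) (PF.imp (.atom p) (.atom r)))
      (PF.imp (.atom p) (PF.cand (.atom q) (.atom r)))) ∧
    ¬ CL1Prov (PF.imp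
      (PF.cand (PF.imp (.atom p) (.atom q)) (PF.imp (.atom p) (.atom r)))
      (PF.imp (.atom p) (PF.and (.atom q) (.atom r)))) := by
  set A : PF := .or (.neg (.atom p)) (.atom q) with hA
  set B : PF := .or (.neg (.atom p)) (.atom r) with hB
  constructor
  · -- provable
    apply CL1Prov.ruleA
    · intro v; simp [PF.imp, PF.elem, PF.eval]
    · intro h hh
      -- invert RuleAPrem true F h
      rcases hh with _ | _ | _ | _ | _ | ⟨_, hh⟩ | ⟨_, hh⟩ | ⟨_, hh⟩ | ⟨_, hh⟩
      · -- orl : inside neg (cand A B)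
        rcases hh with _ | _ | _ | _ | ⟨hh⟩ | _ | _ | _ | _
        rcases hh
      · -- orr : inside (or (neg p) (cand q r))
        rcases hh with _ | _ | _ | _ | _ | ⟨_, hh⟩ | ⟨_, hh⟩ | ⟨_, hh⟩ | ⟨_, hh⟩
        · rcases hh with _ | _ | _ | _ | ⟨hh⟩ | _ | _ | _ | _
          rcases hh
        · -- cand q r replaced
          rcases hh with _ | _ | _ | _ | _ | _ | _ | _ | _
          · -- premise with q
            refine CL1Prov.ruleB (.orl _ (.negc (.cand1 A B))) (prov_of_elem rfl ?_)
            intro v; simp [PF.imp, PF.elem, PF.eval, hA]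
            cases v p <;> cases v q <;> simp
          · -- premise with r
            refine CL1Prov.ruleB (.orl _ (.negc (.cand2 A B))) (prov_of_elem rfl ?_)
            intro v; simp [PF.imp, PF.elem, PF.eval, hB]
            cases v p <;> cases v r <;> simp
  · -- not provable
    intro hprov
    rcases hprov with ⟨hst, _⟩ | ⟨hb, hprov⟩
    · -- rule A impossible: not stable
      have := hst (fun n => decide (n = p))
      simp [PF.imp, PF.elem, PF.eval, hpq.symm, hpr.symm] at this
    · -- rule B: invert RuleBPrem true F' h
      rcases hb with _ | _ | _ | _ | _ | ⟨_, hb⟩ | ⟨_, hb⟩ | ⟨_, hb⟩ | ⟨_, hb⟩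
      · -- orl: inside neg (cand A B)
        rcases hb with _ | _ | _ | _ | ⟨hb⟩ | _ | _ | _ | _
        rcases hb with _ | _ | _ | _ | _ | _ | _ | _ | _
        · -- replaced by A
          rcases hprov with ⟨hst, _⟩ | ⟨hb2, _⟩
          · have := hst (fun n => decide (n = p) || decide (n = q))
            simp [PF.imp, PF.elem, PF.eval, hpq.symm, hpr.symm, hqr.symm] at this
          · have := ruleB_surf hb2
            simp [PF.imp, PF.surf] at this
        · -- replaced by B
          rcases hprov with ⟨hst, _⟩ | ⟨hb2, _⟩
          · have := hst (fun n => decide (n = p) || decide (n = r))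
            simp [PF.imp, PF.elem, PF.eval, hpq.symm, hpr.symm, hqr.symm] at this
            exact hqr this
          · have := ruleB_surf hb2
            simp [PF.imp, PF.surf] at this
      · -- orr: inside (or (neg p) (and q r)) : elementary
        have := ruleB_surf hb
        simp [PF.imp, PF.surf] at this


end CoL
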